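/- arXiv:2602.13149 — 2 statements merged into one kernel-verified Lean document; each statement's English description precedes it below -/
import Mathlib

section
/- A sequence (v_1, v_2, ..., v_k) of vertices of a graph G is a burning sequence if and only if for each pair i, j ∈ {1,...,k} with i ≠ j, d(v_i, v_j) ≥ |i − j|, and the union over l = 1 to k of the closed balls N_{k−l}[v_l] equals V(G). -/
/-- Zero forcing closure: vertices eventually colored blue. -/
inductive SimpleGraph.Forced {V : Type*} (G : SimpleGraph V) (B : Set V) : V → Prop
  | init (v : V) (hv : v ∈ B) : SimpleGraph.Forced G B v
  | force (v w : V) (hv : SimpleGraph.Forced G B v) (hadj : G.Adj v w)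
      (hall : ∀ u, G.Adj v u → u ≠ w → SimpleGraph.Forced G B u) : SimpleGraph.Forced G B w

def SimpleGraph.IsZeroForcingSet {V : Type*} (G : SimpleGraph V) (B : Set V) : Prop :=
  ∀ v, G.Forced B v

noncomputable def SimpleGraph.zeroForcingNumber {V : Type*} (G : SimpleGraph V) : ℕ :=
  sInf {n | ∃ B : Set V, B.ncard = n ∧ G.IsZeroForcingSet B}

/-- closed ball of radius r -/
def SimpleGraph.closedBall {V : Type*} (G : SimpleGraph V) (v : V) (r : ℕ) : Set V :=
  {w | G.edist v w ≤ (r : ℕ∞)}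

/-- Burning sequence (alternative characterization). -/
def SimpleGraph.IsBurningSeq {V : Type*} (G : SimpleGraph V) {k : ℕ} (s : Fin k → V) : Prop :=
  (∀ i j : Fin k, i ≠ j →
      ((((i : ℕ) : ℤ) - ((j : ℕ) : ℤ)).natAbs : ℕ∞) ≤ G.edist (s i) (s j)) ∧
  (⋃ l : Fin k, G.closedBall (s l) (k - 1 - (l : ℕ))) = Set.univ

noncomputable def SimpleGraph.burningNumber {V : Type*} (G : SimpleGraph V) : ℕ :=
  sInf {k | ∃ s : Fin k → V, G.IsBurningSeq s}

/-- Strong product of graphs. -/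
def SimpleGraph.strongProd {α β : Type*} (G : SimpleGraph α) (H : SimpleGraph β) :
    SimpleGraph (α × β) where
  Adj x y := (x.1 = y.1 ∧ H.Adj x.2 y.2) ∨ (x.2 = y.2 ∧ G.Adj x.1 y.1) ∨
    (G.Adj x.1 y.1 ∧ H.Adj x.2 y.2)
  symm := by
    constructor
    rintro ⟨a, b⟩ ⟨c, d⟩ (⟨h1, h2⟩ | ⟨h1, h2⟩ | ⟨h1, h2⟩)
    · exact Or.inl ⟨h1.symm, h2.symm⟩
    · exact Or.inr (Or.inl ⟨h1.symm, h2.symm⟩)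
    · exact Or.inr (Or.inr ⟨h1.symm, h2.symm⟩)
  loopless := by
    constructor
    rintro ⟨a, b⟩ (⟨_, h2⟩ | ⟨_, h2⟩ | ⟨h1, _⟩)
    exacts [H.irrefl h2, G.irrefl h2, G.irrefl h1]

instance {α β : Type*} (G : SimpleGraph α) (H : SimpleGraph β)
    [DecidableEq α] [DecidableEq β] [DecidableRel G.Adj] [DecidableRel H.Adj] :
    DecidableRel (G.strongProd H).Adj :=
  fun _ _ => inferInstanceAs (Decidable (_ ∨ _ ∨ _))

section Hypergraph
variable {V : Type*} [DecidableEq V]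

/-- Lazy burning closure on a hypergraph given by its edge set. -/
inductive LazyBurned (E : Finset (Finset V)) (B : Set V) : V → Prop
  | init (v : V) (hv : v ∈ B) : LazyBurned E B v
  | spread (v : V) (h : Finset V) (hE : h ∈ E) (hcard : 2 ≤ h.card) (hv : v ∈ h)
      (hall : ∀ u ∈ h, u ≠ v → LazyBurned E B u) : LazyBurned E B v

def IsLazyBurningSet (E : Finset (Finset V)) (B : Set V) : Prop := ∀ v, LazyBurned E B v

noncomputable def lazyBurningNumber (E : Finset (Finset V)) : ℕ :=
  sInf {n | ∃ B : Set V, B.ncard = n ∧ IsLazyBurningSet E B}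

/-- one round of propagation in hypergraph burning -/
def hSpread (E : Finset (Finset V)) (S : Set V) : Set V :=
  S ∪ {v | ∃ h ∈ E, 2 ≤ h.card ∧ v ∈ h ∧ ∀ u ∈ h, u ≠ v → u ∈ S}

/-- burned vertices after t rounds of the (round-based) hypergraph burning process -/
def hBurnedAt (E : Finset (Finset V)) {k : ℕ} (s : Fin k → V) : ℕ → Set V
  | 0 => ∅
  | t + 1 => hSpread E (hBurnedAt E s t) ∪ {v | ∃ ht : t < k, v = s ⟨t, ht⟩}

noncomputable def hBurningNumber (E : Finset (Finset V)) : ℕ :=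
  sInf {k | ∃ s : Fin k → V,
    (∀ t : Fin k, s t ∉ hBurnedAt E s (t : ℕ)) ∧ hBurnedAt E s k = Set.univ}

/-- incidence graph of a hypergraph -/
def IG (E : Finset (Finset V)) : SimpleGraph (V ⊕ {h // h ∈ E}) where
  Adj x y := (∃ v h, x = Sum.inl v ∧ y = Sum.inr h ∧ v ∈ (h : Finset V)) ∨
    (∃ v h, x = Sum.inr h ∧ y = Sum.inl v ∧ v ∈ (h : Finset V))
  symm := by
    constructor
    rintro x y (⟨v, h, rfl, rfl, hm⟩ | ⟨v, h, rfl, rfl, hm⟩)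
    · exact Or.inr ⟨v, h, rfl, rfl, hm⟩
    · exact Or.inl ⟨v, h, rfl, rfl, hm⟩
  loopless := by
    constructor
    rintro x (⟨v, h, rfl, he, hm⟩ | ⟨v, h, rfl, he, hm⟩) <;> simp at he

/-- connectivity relation of a hypergraph -/
def hconn (E : Finset (Finset V)) : V → V → Prop :=
  Relation.ReflTransGen (fun u v => ∃ h ∈ E, u ∈ h ∧ v ∈ h)

end Hypergraph

/-- burned vertices after `t` rounds of the graph burning process with sources `s` -/
def burnedAt {V : Type*} (G : SimpleGraph V) {k : ℕ} (s : Fin k → V) : ℕ → Set V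
  | 0 => ∅
  | t + 1 => burnedAt G s t ∪ {v | ∃ ht : t < k, v = s ⟨t, ht⟩} ∪
      {w | ∃ v ∈ burnedAt G s t, G.Adj v w}

lemma step_down {V : Type*} (G : SimpleGraph V) (x v : V) (n : ℕ)
    (h1 : G.edist x v ≤ (n + 1 : ℕ)) (h2 : ¬ G.edist x v ≤ (n : ℕ)) :
    ∃ u, G.Adj u v ∧ G.edist x u ≤ (n : ℕ) := by
  have hne : G.edist x v ≠ ⊤ := ne_top_of_le_ne_top (ENat.coe_ne_top _) h1
  obtain ⟨p, hp⟩ := SimpleGraph.exists_walk_of_edist_ne_top hne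
  have hlen : (p.length : ℕ∞) ≤ (n + 1 : ℕ) := hp ▸ h1
  have hlen' : p.length ≤ n + 1 := by exact_mod_cast hlen
  have hpos : 0 < p.length := by
    rcases Nat.eq_zero_or_pos p.length with h0 | h
    · exfalso; apply h2; rw [← hp, h0]; simp
    · exact h
  cases hq : p.reverse with
  | nil =>
    rw [← SimpleGraph.Walk.length_reverse p, hq] at hpos
    simp at hpos
  | cons hadj r =>
    rename_i u
    refine ⟨u, hadj.symm, ?_⟩
    have hh := congrArg SimpleGraph.Walk.length hq
    simp [SimpleGraph.Walk.length_reverse] at hh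
    have hru : r.reverse.length ≤ n := by
      rw [SimpleGraph.Walk.length_reverse]; omega
    calc G.edist x u ≤ r.reverse.length := SimpleGraph.edist_le _
      _ ≤ (n : ℕ∞) := by exact_mod_cast hru

lemma burnedAt_mem {V : Type*} (G : SimpleGraph V) {k : ℕ} (s : Fin k → V) (t : ℕ) (v : V) :
    v ∈ burnedAt G s t ↔
      ∃ l : Fin k, (l : ℕ) < t ∧ G.edist (s l) v ≤ ((t - 1 - (l : ℕ) : ℕ) : ℕ∞) := by
  induction t generalizing v with
  | zero => simp [burnedAt]
  | succ t ih =>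
    constructor
    · rintro (⟨hb | ⟨ht, rfl⟩⟩ | ⟨u, hu, hadj⟩)
      · obtain ⟨l, hl, hd⟩ := (ih _).mp hb
        exact ⟨l, by omega, le_trans hd (Nat.cast_le.mpr (by omega))⟩
      · exact ⟨⟨t, ht⟩, by simp, by simp [SimpleGraph.edist_self]⟩
      · obtain ⟨l, hl, hd⟩ := (ih _).mp hu
        refine ⟨l, by omega, ?_⟩
        have h1 : G.edist (s l) v ≤ G.edist (s l) u + 1 := by
          calc G.edist (s l) v ≤ G.edist (s l) u + G.edist u v := SimpleGraph.edist_triangle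
            _ = G.edist (s l) u + 1 := by
                rw [SimpleGraph.edist_eq_one_iff_adj.mpr hadj]
        calc G.edist (s l) v ≤ G.edist (s l) u + 1 := h1
          _ ≤ ((t - 1 - (l : ℕ) : ℕ) : ℕ∞) + 1 := by exact add_le_add_left hd 1
          _ = ((t + 1 - 1 - (l : ℕ) : ℕ) : ℕ∞) := by
              have he : (t + 1 - 1 - (l : ℕ)) = (t - 1 - (l : ℕ)) + 1 := by omega
              rw [he, Nat.cast_add, Nat.cast_one]
    · rintro ⟨l, hl, hd⟩
      by_cases hcase : (l : ℕ) = t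
      · have ht : t < k := hcase ▸ l.isLt
        have hz : (t + 1 - 1 - (l : ℕ) : ℕ) = 0 := by omega
        rw [hz] at hd
        simp only [Nat.cast_zero, nonpos_iff_eq_zero, SimpleGraph.edist_eq_zero_iff] at hd
        left; right
        refine ⟨ht, ?_⟩
        rw [← hd]
        congr 1
        exact Fin.ext hcase
      · have hl' : (l : ℕ) < t := by omega
        by_cases hd' : G.edist (s l) v ≤ ((t - 1 - (l : ℕ) : ℕ) : ℕ∞)
        · exact Or.inl (Or.inl ((ih v).mpr ⟨l, hl', hd'⟩))
        · obtain ⟨u, hadj, hu⟩ := step_down G (s l) v (t - 1 - (l : ℕ))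
            (by convert hd using 2; omega) hd'
          exact Or.inr ⟨u, (ih u).mpr ⟨l, hl', hu⟩, hadj⟩

/-- Alternative characterization of burning sequences: `s` is a burning sequence iff the
sources are pairwise at distance at least the difference of their indices and the closed
balls of the appropriate radii around the sources cover the graph. -/
theorem stmt2 {V : Type*} [Fintype V] (G : SimpleGraph V) {k : ℕ} (s : Fin k → V) :
    ((∀ t : Fin k, s t ∉ burnedAt G s (t : ℕ)) ∧ burnedAt G s k = Set.univ) ↔
      G.IsBurningSeq s := by
  constructor
  · rintro ⟨h1, h2⟩
    have key : ∀ i j : Fin k, (j : ℕ) < (i : ℕ) →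
        (((i : ℕ) - (j : ℕ) : ℕ) : ℕ∞) ≤ G.edist (s j) (s i) := by
      intro i j hji
      by_contra hlt
      push_neg at hlt
      have hne : G.edist (s j) (s i) ≠ ⊤ := ne_top_of_lt hlt
      obtain ⟨m, hm⟩ := WithTop.ne_top_iff_exists.mp hne
      rw [← hm] at hlt
      have hmlt : m < (i : ℕ) - (j : ℕ) := Nat.cast_lt.mp hlt
      apply h1 i
      refine (burnedAt_mem G s (i : ℕ) (s i)).mpr ⟨j, hji, ?_⟩
      rw [← hm]
      exact Nat.cast_le.mpr (by omega)
    constructor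
    · intro i j hij
      rcases lt_or_gt_of_ne (fun h : (i : ℕ) = (j : ℕ) => hij (Fin.ext h)) with h | h
      · have := key j i h
        have habs : (((i : ℕ) : ℤ) - ((j : ℕ) : ℤ)).natAbs = (j : ℕ) - (i : ℕ) := by omega
        rw [habs]
        exact this
      · have := key i j h
        have habs : (((i : ℕ) : ℤ) - ((j : ℕ) : ℤ)).natAbs = (i : ℕ) - (j : ℕ) := by omega
        rw [habs, SimpleGraph.edist_comm]
        exact this
    · ext v
      simp only [Set.mem_iUnion, Set.mem_univ, iff_true]
      have : v ∈ burnedAt G s k := h2 ▸ Set.mem_univ v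
      obtain ⟨l, _, hd⟩ := (burnedAt_mem G s k v).mp this
      exact ⟨l, hd⟩
  · rintro ⟨hpair, hcov⟩
    constructor
    · intro t ht
      obtain ⟨l, hl, hd⟩ := (burnedAt_mem G s (t : ℕ) (s t)).mp ht
      have hne : l ≠ t := fun h => by omega
      have := hpair l t hne
      have habs : (((l : ℕ) : ℤ) - ((t : ℕ) : ℤ)).natAbs = (t : ℕ) - (l : ℕ) := by omega
      rw [habs] at this
      have hle : ((((t : ℕ) - (l : ℕ) : ℕ)) : ℕ∞) ≤ (((t : ℕ) - 1 - (l : ℕ) : ℕ) : ℕ∞) :=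
        le_trans this hd
      have : ((t : ℕ) - (l : ℕ)) ≤ ((t : ℕ) - 1 - (l : ℕ)) := by exact_mod_cast hle
      omega
    · ext v
      simp only [Set.mem_univ, iff_true]
      have : v ∈ (⋃ l : Fin k, G.closedBall (s l) (k - 1 - (l : ℕ))) := hcov ▸ Set.mem_univ v
      obtain ⟨l, hd⟩ := Set.mem_iUnion.mp this
      exact (burnedAt_mem G s k v).mpr ⟨l, l.isLt, hd⟩
end

section
/- Let H be a hypergraph and let k be the number of connected components of H that contain at least one non-singleton hyperedge. Then Z(IG(H)) ≤ b_L(H) + |E(H)| − k. -/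
/-- `Z(IG(H)) ≤ b_L(H) + |E(H)| - k`, where `k` is the number of connected components of `H`
containing a non-singleton hyperedge. -/
theorem stmt6 {V : Type*} [Fintype V] [DecidableEq V] (E : Finset (Finset V)) :
    (IG E).zeroForcingNumber ≤ lazyBurningNumber E + E.card -
      Set.ncard {c : Set V | (∃ v, c = {u | hconn E v u}) ∧
        ∃ h ∈ E, 2 ≤ h.card ∧ ∃ v ∈ h, v ∈ c} := by
  classical
  set K := {c : Set V | (∃ v, c = {u | hconn E v u}) ∧
      ∃ h ∈ E, 2 ≤ h.card ∧ ∃ v ∈ h, v ∈ c} with hKdef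
  -- hconn is symmetric and transitive
  have hsymm : ∀ a b : V, hconn E a b → hconn E b a := fun a b hab =>
    (@Relation.ReflTransGen.symmetric _ (fun u v => ∃ h ∈ E, u ∈ h ∧ v ∈ h)
      ⟨fun u v ⟨h, hE, hu, hv⟩ => ⟨h, hE, hv, hu⟩⟩).symm _ _ hab
  have hstep : ∀ (u v : V) (h : Finset V), h ∈ E → u ∈ h → v ∈ h → hconn E u v :=
    fun u v h hE hu hv => Relation.ReflTransGen.single ⟨h, hE, hu, hv⟩
  have hclass : ∀ a b : V, hconn E a b → {u | hconn E a u} = {u | hconn E b u} := by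
    intro a b hab
    ext u
    exact ⟨fun h => (hsymm a b hab).trans h, fun h => hab.trans h⟩
  -- every c ∈ K is the hconn-class of any of its members
  have class_mem : ∀ c ∈ K, ∀ u ∈ c, c = {x | hconn E u x} := by
    intro c hc u hu
    obtain ⟨⟨v, rfl⟩, _⟩ := hc
    exact hclass v u hu
  -- choose for each component in K a non-singleton edge
  have hKchoice : ∀ c ∈ K, ∃ h : Finset V, h ∈ E ∧ 2 ≤ h.card ∧ ∃ v ∈ h, v ∈ c := by
    intro c hc
    obtain ⟨_, h, hE, h2, v, hv, hvc⟩ := hc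
    exact ⟨h, hE, h2, v, hv, hvc⟩
  choose! f hfE hfcard hfwit using hKchoice
  -- all vertices of f c lie in c
  have hfsub : ∀ c ∈ K, ∀ u ∈ f c, u ∈ c := by
    intro c hc u hu
    obtain ⟨w, hw, hwc⟩ := hfwit c hc
    rw [class_mem c hc w hwc]
    exact hstep w u (f c) (hfE c hc) hw hu
  set S : Set (Finset V) := f '' K with hSdef
  -- f is injective on K
  have hfinj : Set.InjOn f K := by
    intro c hc c' hc' heq
    obtain ⟨w, hw, hwc⟩ := hfwit c hc
    obtain ⟨w', hw', hwc'⟩ := hfwit c' hc'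
    rw [class_mem c hc w hwc, class_mem c' hc' w' hwc']
    exact hclass w w' (hstep w w' (f c') (hfE c' hc') (heq ▸ hw) hw')
  -- two edges of S sharing a vertex are equal
  have excl : ∀ h ∈ S, ∀ h' ∈ S, ∀ u : V, u ∈ h → u ∈ h' → h = h' := by
    rintro h ⟨c, hc, rfl⟩ h' ⟨c', hc', rfl⟩ u hu hu'
    have h1 : c = c' := by
      rw [class_mem c hc u (hfsub c hc u hu), class_mem c' hc' u (hfsub c' hc' u hu')]
    rw [h1]
  -- a minimum lazy burning set
  have hne : {n | ∃ B : Set V, B.ncard = n ∧ IsLazyBurningSet E B}.Nonempty :=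
    ⟨(Set.univ : Set V).ncard, Set.univ, rfl, fun v => LazyBurned.init v (Set.mem_univ v)⟩
  obtain ⟨B, hBcard, hBburn⟩ :
      ∃ B : Set V, B.ncard = lazyBurningNumber E ∧ IsLazyBurningSet E B :=
    Nat.sInf_mem hne
  -- the blue set
  set T : Set {h // h ∈ E} := {h | (h : Finset V) ∉ S} with hTdef
  set B' : Set (V ⊕ {h // h ∈ E}) := Sum.inl '' B ∪ Sum.inr '' T with hB'def
  -- forcing an excluded edge from one of its forced vertices
  have forceEdge : ∀ hh : {h // h ∈ E}, (hh : Finset V) ∈ S → ∀ u ∈ (hh : Finset V),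
      (IG E).Forced B' (Sum.inl u) → (IG E).Forced B' (Sum.inr hh) := by
    intro hh hS u hu hfu
    refine SimpleGraph.Forced.force (Sum.inl u) (Sum.inr hh) hfu
      (Or.inl ⟨u, hh, rfl, rfl, hu⟩) ?_
    rintro x (⟨v', h', he1, rfl, hm⟩ | ⟨v', h', he1, he2, hm⟩) hne2
    · injection he1 with he1
      subst he1
      by_cases hS' : (h' : Finset V) ∈ S
      · exact absurd (congrArg Sum.inr (Subtype.ext (excl _ hS' _ hS u hm hu))) hne2
      · exact SimpleGraph.Forced.init _ (Or.inr ⟨h', hS', rfl⟩)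
    · simp at he1
  -- all lazily burned vertices are forced
  have main : ∀ v, LazyBurned E B v → (IG E).Forced B' (Sum.inl v) := by
    intro v hv
    induction hv with
    | init v hvB => exact SimpleGraph.Forced.init _ (Or.inl ⟨v, hvB, rfl⟩)
    | spread v h hE hcard hvh hall ih =>
      have hEdge : (IG E).Forced B' (Sum.inr ⟨h, hE⟩) := by
        by_cases hS : h ∈ S
        · obtain ⟨u, hu, hune⟩ := Finset.exists_mem_ne hcard v
          exact forceEdge ⟨h, hE⟩ hS u hu (ih u hu hune)
        · exact SimpleGraph.Forced.init _ (Or.inr ⟨⟨h, hE⟩, hS, rfl⟩)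
      refine SimpleGraph.Forced.force (Sum.inr ⟨h, hE⟩) (Sum.inl v) hEdge
        (Or.inr ⟨v, ⟨h, hE⟩, rfl, rfl, hvh⟩) ?_
      rintro x (⟨v', h', he1, he2, hm⟩ | ⟨v', h', he1, rfl, hm⟩) hne2
      · simp at he1
      · injection he1 with he1
        subst he1
        exact ih v' hm (fun e => hne2 (by rw [e]))
  -- B' is a zero forcing set
  have hZ : (IG E).IsZeroForcingSet B' := by
    rintro (v | hh)
    · exact main v (hBburn v)
    · by_cases hS : (hh : Finset V) ∈ S
      · obtain ⟨c, hcK, hfc⟩ := hS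
        obtain ⟨w, hw, hwc⟩ := hfwit c hcK
        have hw' : w ∈ (hh : Finset V) := by rw [← hfc]; exact hw
        exact forceEdge hh (hfc ▸ ⟨c, hcK, rfl⟩) w hw' (main w (hBburn w))
      · exact SimpleGraph.Forced.init _ (Or.inr ⟨hh, hS, rfl⟩)
  -- cardinality computations
  have hSK : S.ncard = K.ncard := Set.ncard_image_of_injOn hfinj
  have hSsub : S ⊆ (E : Set (Finset V)) := by
    rintro h ⟨c, hc, rfl⟩
    exact hfE c hc
  have hkE : K.ncard ≤ E.card := by
    rw [← hSK, ← Set.ncard_coe_finset E]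
    exact Set.ncard_le_ncard hSsub (Set.toFinite _)
  have hTcard : T.ncard = E.card - K.ncard := by
    have hcompl : T = {h : {h // h ∈ E} | (h : Finset V) ∈ S}ᶜ := by
      ext h; simp [hTdef]
    have h1 : {h : {h // h ∈ E} | (h : Finset V) ∈ S}.ncard +
        {h : {h // h ∈ E} | (h : Finset V) ∈ S}ᶜ.ncard = Nat.card {h // h ∈ E} :=
      Set.ncard_add_ncard_compl _
    have h2 : Nat.card {h // h ∈ E} = E.card := by
      rw [Nat.card_eq_fintype_card, Fintype.card_coe]
    have h3 : (Subtype.val '' {h : {h // h ∈ E} | (h : Finset V) ∈ S}) = S := by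
      ext h
      constructor
      · rintro ⟨h', hh', rfl⟩; exact hh'
      · intro hh; exact ⟨⟨h, hSsub hh⟩, hh, rfl⟩
    have h4 : {h : {h // h ∈ E} | (h : Finset V) ∈ S}.ncard = K.ncard := by
      have h5 := Set.ncard_image_of_injective {h : {h // h ∈ E} | (h : Finset V) ∈ S}
        Subtype.val_injective
      rw [h3] at h5
      exact h5.symm.trans hSK
    rw [hcompl]
    omega
  have hdisj : Disjoint (Sum.inl '' B : Set (V ⊕ {h // h ∈ E})) (Sum.inr '' T) := by
    rw [Set.disjoint_left]
    rintro x ⟨a, _, rfl⟩ ⟨b, _, hb⟩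
    simp at hb
  have hB'card : B'.ncard = lazyBurningNumber E + (E.card - K.ncard) := by
    rw [hB'def, Set.ncard_union_eq hdisj (Set.toFinite _) (Set.toFinite _),
      Set.ncard_image_of_injective _ Sum.inl_injective,
      Set.ncard_image_of_injective _ Sum.inr_injective, hBcard, hTcard]
  have hle : (IG E).zeroForcingNumber ≤ B'.ncard := Nat.sInf_le ⟨B', rfl, hZ⟩
  rw [hB'card] at hle
  omega
end
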